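/- Let G be a connected finite simple undirected graph and S ⊆ V with |S| = 3. Then S is not a minimal perfect critical set of G. -/

import Mathlib

open Matrix
open scoped Classical

/-- `S` is a critical set of `G`: `S` is nonempty and there is a nonzero eigenvector of the
Laplacian of `G` vanishing outside `S`. -/
def IsCriticalSet {V : Type*} [Fintype V] [DecidableEq V] (G : SimpleGraph V) (S : Set V) :
    Prop :=
  S.Nonempty ∧ ∃ (lam : ℝ) (y : V → ℝ), y ≠ 0 ∧
    G.lapMatrix ℝ *ᵥ y = lam • y ∧ ∀ v ∉ S, y v = 0

/-- `S` is a perfect critical set of `G`: some inducing eigenvector vanishes outside `S` and is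
nonzero at every vertex of `S`. -/
def IsPerfectCriticalSet {V : Type*} [Fintype V] [DecidableEq V] (G : SimpleGraph V)
    (S : Set V) : Prop :=
  S.Nonempty ∧ ∃ (lam : ℝ) (y : V → ℝ), y ≠ 0 ∧
    G.lapMatrix ℝ *ᵥ y = lam • y ∧ (∀ v ∉ S, y v = 0) ∧ ∀ v ∈ S, y v ≠ 0

/-- `S` is a minimal perfect critical set of `G`: a perfect critical set none of whose proper
subsets is a perfect critical set. -/
def IsMinimalPerfectCriticalSet {V : Type*} [Fintype V] [DecidableEq V] (G : SimpleGraph V)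
    (S : Set V) : Prop :=
  IsPerfectCriticalSet G S ∧ ∀ T : Set V, T ⊂ S → ¬ IsPerfectCriticalSet G T

lemma pair_pcs {V : Type*} [Fintype V] [DecidableEq V] (G : SimpleGraph V) (a b : V)
    (hab : a ≠ b) (hall : ∀ w, w ≠ a → w ≠ b → (G.Adj w a ↔ G.Adj w b)) :
    IsPerfectCriticalSet G {a, b} := by
  set z : V → ℝ := fun v => if v = a then 1 else if v = b then -1 else 0 with hz
  have hdeg : (G.degree a : ℝ) = G.degree b := by
    rw [SimpleGraph.degree_eq_sum_if_adj, SimpleGraph.degree_eq_sum_if_adj]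
    refine Fintype.sum_equiv (Equiv.swap a b) _ _ ?_
    intro j
    rcases eq_or_ne j a with rfl | hja
    · simp [Equiv.swap_apply_left, G.adj_comm]
    rcases eq_or_ne j b with rfl | hjb
    · simp [Equiv.swap_apply_right, G.adj_comm]
    · rw [Equiv.swap_apply_of_ne_of_ne hja hjb]
      have h1 := hall j hja hjb
      rw [G.adj_comm j a, G.adj_comm j b] at h1
      simp [h1]
  have hsum : ∀ v : V, ∑ u ∈ G.neighborFinset v, z u
      = (if G.Adj v a then 1 else 0) - (if G.Adj v b then 1 else 0) := by
    intro v
    have huz : ∀ u : V, z u = (if u = a then (1:ℝ) else 0) + (if u = b then -1 else 0) := by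
      intro u
      rcases eq_or_ne u a with rfl | hua
      · simp [hz, hab]
      · rcases eq_or_ne u b with rfl | hub
        · simp [hz, hua]
        · simp [hz, hua, hub]
    simp_rw [huz]
    rw [Finset.sum_add_distrib, Finset.sum_ite_eq', Finset.sum_ite_eq']
    simp [SimpleGraph.mem_neighborFinset, sub_eq_add_neg]
    split_ifs <;> ring
  refine ⟨⟨a, by simp⟩, (G.degree a : ℝ) + (if G.Adj a b then 1 else 0), z, ?_, ?_, ?_, ?_⟩
  · intro h
    have := congrFun h a
    simp [hz] at this
  · ext v
    rw [SimpleGraph.lapMatrix_mulVec_apply, hsum]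
    simp only [Pi.smul_apply, smul_eq_mul, hz]
    rcases eq_or_ne v a with rfl | hva
    · simp only [if_pos rfl, if_neg (G.irrefl (v := v)), mul_one]
      split_ifs <;> ring
    rcases eq_or_ne v b with rfl | hvb
    · rw [hdeg, G.adj_comm a v] at *
      simp only [if_neg hva, if_pos rfl]
      simp only [if_neg (G.irrefl (v := v))]
      split_ifs <;> ring
    · have h1 := hall v hva hvb
      simp only [if_neg hva, if_neg hvb, mul_zero]
      by_cases h2 : G.Adj v a
      · rw [if_pos h2, if_pos (h1.mp h2)]; ring
      · rw [if_neg h2, if_neg (fun h => h2 (h1.mpr h))]; ring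
  · intro v hv
    simp only [Set.mem_insert_iff, Set.mem_singleton_iff, not_or] at hv
    simp [hz, hv.1, hv.2]
  · intro v hv
    rcases hv with rfl | hv
    · simp [hz]
    · rw [Set.mem_singleton_iff] at hv; subst hv; simp [hz, hab.symm]

/-- Theorem 4: no three-element set is a minimal perfect critical set of a connected graph. -/
theorem no_mpcs_card_three {V : Type*} [Fintype V] [DecidableEq V]
    (G : SimpleGraph V) (hG : G.Connected) (S : Set V) (hS : S.ncard = 3) :
    ¬ IsMinimalPerfectCriticalSet G S := by
  obtain ⟨a, b, c, hab, hac, hbc, rfl⟩ := Set.ncard_eq_three.mp hS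
  rintro ⟨⟨-, lam, y, hy0, heig, hout, hin⟩, hmin⟩
  have hya : y a ≠ 0 := hin a (by simp)
  have hyb : y b ≠ 0 := hin b (by simp)
  have hyc : y c ≠ 0 := hin c (by simp)
  -- every vertex outside S is adjacent to all of a,b,c or to none
  have hP : ∀ w, w ∉ ({a, b, c} : Set V) →
      ((G.Adj w a ↔ G.Adj w b) ∧ (G.Adj w b ↔ G.Adj w c)) := by
    by_cases hlam : lam = 0
    · -- y is in the kernel, hence constant, hence nonzero everywhere: no vertex outside S
      have hker : ∀ i j : V, y i = y j := by
        intro i j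
        refine (SimpleGraph.lapMatrix_mulVec_eq_zero_iff_forall_reachable G).mp
          ?_ i j (hG.preconnected i j)
        rw [heig, hlam, zero_smul]
      intro w hw
      exact absurd ((hker a w).trans (hout w hw)) hya
    · -- lam ≠ 0 forces y a + y b + y c = 0
      have hone : (fun _ : V => (1:ℝ)) ᵥ* (G.lapMatrix ℝ) = 0 := by
        have hs : (G.lapMatrix ℝ)ᵀ = G.lapMatrix ℝ := G.isSymm_lapMatrix ℝ
        rw [← Matrix.mulVec_transpose, hs, SimpleGraph.lapMatrix_mulVec_const_eq_zero]
      have hyform : ∀ u : V, y u = (if u = a then y a else 0) + (if u = b then y b else 0)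
          + (if u = c then y c else 0) := by
        intro u
        rcases eq_or_ne u a with rfl | hua
        · simp [hab, hac]
        rcases eq_or_ne u b with rfl | hub
        · simp [hua, hbc]
        rcases eq_or_ne u c with rfl | huc
        · simp [hua, hub]
        · simp [hua, hub, huc, hout u (by simp [hua, hub, huc])]
      have hsum0 : y a + y b + y c = 0 := by
        have h1 : (fun _ : V => (1:ℝ)) ⬝ᵥ (G.lapMatrix ℝ *ᵥ y) = 0 := by
          rw [Matrix.dotProduct_mulVec, hone, zero_dotProduct]
        rw [heig] at h1
        have h2 : (fun _ : V => (1:ℝ)) ⬝ᵥ (lam • y) = lam * (∑ v : V, y v) := by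
          simp [dotProduct, Finset.mul_sum]
        have h3 : (∑ v : V, y v) = y a + y b + y c := by
          rw [Finset.sum_congr rfl (fun u _ => hyform u), Finset.sum_add_distrib,
            Finset.sum_add_distrib, Finset.sum_ite_eq', Finset.sum_ite_eq', Finset.sum_ite_eq']
          simp
        rw [h2, h3] at h1
        rcases mul_eq_zero.mp h1 with h | h
        · exact absurd h hlam
        · exact h
      intro w hw
      have hkey : (if G.Adj w a then y a else 0) + (if G.Adj w b then y b else 0)
          + (if G.Adj w c then y c else 0) = 0 := by
        have h1 := congrFun heig w
        rw [SimpleGraph.lapMatrix_mulVec_apply] at h1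
        have h2 : y w = 0 := hout w hw
        simp only [Pi.smul_apply, smul_eq_mul, h2, mul_zero] at h1
        have h3 : ∑ u ∈ G.neighborFinset w, y u = 0 := by linarith
        have hnbr : ∑ u ∈ G.neighborFinset w, y u = (if G.Adj w a then y a else 0)
            + (if G.Adj w b then y b else 0) + (if G.Adj w c then y c else 0) := by
          rw [Finset.sum_congr rfl (fun u _ => hyform u), Finset.sum_add_distrib,
            Finset.sum_add_distrib, Finset.sum_ite_eq', Finset.sum_ite_eq', Finset.sum_ite_eq']
          simp only [SimpleGraph.mem_neighborFinset]
        rw [← hnbr]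
        exact h3
      by_cases h1 : G.Adj w a <;> by_cases h2 : G.Adj w b <;> by_cases h3 : G.Adj w c <;>
        simp only [h1, h2, h3, if_true, if_false, iff_true, iff_false, add_zero, zero_add] at hkey ⊢ <;>
        first
          | exact ⟨trivial, trivial⟩
          | tauto
          | (exfalso;
             first
               | exact hya (by linarith)
               | exact hyb (by linarith)
               | exact hyc (by linarith))
  -- find a suitable pair
  by_cases hcab : G.Adj c a ↔ G.Adj c b
  · refine hmin {a, b} ?_ (pair_pcs G a b hab ?_)
    · refine ⟨?_, fun h => ?_⟩
      · intro x hx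
        simp only [Set.mem_insert_iff, Set.mem_singleton_iff] at *
        tauto
      · have := h (by simp : c ∈ ({a, b, c} : Set V))
        simp only [Set.mem_insert_iff, Set.mem_singleton_iff] at this
        rcases this with h1 | h1
        · exact hac h1.symm
        · exact hbc h1.symm
    · intro w hwa hwb
      rcases eq_or_ne w c with rfl | hwc
      · exact hcab
      · exact (hP w (by simp [hwa, hwb, hwc])).1
  · by_cases hbac : G.Adj b a ↔ G.Adj b c
    · refine hmin {a, c} ?_ (pair_pcs G a c hac ?_)
      · refine ⟨?_, fun h => ?_⟩
        · intro x hx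
          simp only [Set.mem_insert_iff, Set.mem_singleton_iff] at *
          tauto
        · have := h (by simp : b ∈ ({a, b, c} : Set V))
          simp only [Set.mem_insert_iff, Set.mem_singleton_iff] at this
          rcases this with h1 | h1
          · exact hab h1.symm
          · exact hbc h1
      · intro w hwa hwc
        rcases eq_or_ne w b with rfl | hwb
        · exact hbac
        · exact ((hP w (by simp [hwa, hwb, hwc])).1).trans (hP w (by simp [hwa, hwb, hwc])).2
    · refine hmin {b, c} ?_ (pair_pcs G b c hbc ?_)
      · refine ⟨?_, fun h => ?_⟩
        · intro x hx
          simp only [Set.mem_insert_iff, Set.mem_singleton_iff] at *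
          tauto
        · have := h (by simp : a ∈ ({a, b, c} : Set V))
          simp only [Set.mem_insert_iff, Set.mem_singleton_iff] at this
          rcases this with h1 | h1
          · exact hab h1
          · exact hac h1
      · intro w hwb hwc
        rcases eq_or_ne w a with rfl | hwa
        · -- need G.Adj w b ↔ G.Adj w c from the two failures
          have e1 : G.Adj c w ↔ G.Adj w c := G.adj_comm c w
          have e2 : G.Adj c b ↔ G.Adj b c := G.adj_comm c b
          have e3 : G.Adj b w ↔ G.Adj w b := G.adj_comm b w
          rw [e1, e2] at hcab
          rw [e3] at hbac
          by_cases hr : G.Adj b c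
          · exact iff_of_false (fun h => hbac (iff_of_true h hr))
              (fun h => hcab (iff_of_true h hr))
          · refine iff_of_true ?_ ?_
            · by_contra h; exact hbac (iff_of_false h hr)
            · by_contra h; exact hcab (iff_of_false h hr)
        · exact (hP w (by simp [hwa, hwb, hwc])).2
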